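/- arXiv:1904.11803 — 5 statements merged into one kernel-verified Lean document; each statement's English description precedes it below -/
import Mathlib

section
/- Let m ≥ 2, let X be a set, and for every pair i ≠ j in Fin m let C_{i,j} : X → Fin m be a concrete binary classifier with C_{i,j}(x) ∈ {i, j} for all x, and assume the symmetry C_{i,j} = C_{j,i}. Define votes(x, i) = card {j | j ≠ i ∧ C_{i,j}(x) = i} and the ovo multi-classifier M(x) = {i | ∀ j, votes(x, j) ≤ votes(x, i)}. Let A be a type with concretization γ : A → Set X, and for each pair i ≠ j let C♯_{i,j} : A → Option (Fin m) be a sound abstract binary classifier: C♯_{i,j} = C♯_{j,i}, if C♯_{i,j}(a) = some y then y ∈ {i, j} and C_{i,j}(x) = y for all x ∈ γ(a). Define, for a : A, v_min(a, i) = card {j | j ≠ i ∧ C♯_{i,j}(a) = some i} and v_max(a, i) = card {j | j ≠ i ∧ (C♯_{i,j}(a) = some i ∨ C♯_{i,j}(a) = none)}, and the abstract ovo multi-classifier M♯(a) = {i | ∀ j ≠ i, v_min(a, j) ≤ v_max(a, i)}. Then M♯ is sound for M: for every a : A and every x ∈ γ(a), M(x) ⊆ M♯(a). -/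
/-- Soundness of the abstract ovo multi-classifier based on sound abstract
binary classifiers and the abstract voting procedure. -/
theorem ovo_abstract_multiclassifier_sound {X A : Type*}
    (m : ℕ) (hm : 2 ≤ m) (γ : A → Set X)
    (Cc : Fin m → Fin m → X → Fin m)
    (hrange : ∀ i j : Fin m, i ≠ j → ∀ x : X, Cc i j x = i ∨ Cc i j x = j)
    (hsymm : ∀ i j : Fin m, Cc i j = Cc j i)
    (Cs : Fin m → Fin m → A → Option (Fin m))
    (hssymm : ∀ i j : Fin m, Cs i j = Cs j i)
    (hsound : ∀ i j : Fin m, i ≠ j → ∀ (a : A) (y : Fin m), Cs i j a = some y →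
      (y = i ∨ y = j) ∧ ∀ x ∈ γ a, Cc i j x = y)
    (votes : X → Fin m → ℕ)
    (hvotes : ∀ (x : X) (i : Fin m),
      votes x i = (Finset.univ.filter (fun j : Fin m => j ≠ i ∧ Cc i j x = i)).card)
    (M : X → Set (Fin m))
    (hM : ∀ x : X, M x = {i : Fin m | ∀ j : Fin m, votes x j ≤ votes x i})
    (vmin vmax : A → Fin m → ℕ)
    (hvmin : ∀ (a : A) (i : Fin m),
      vmin a i = (Finset.univ.filter (fun j : Fin m => j ≠ i ∧ Cs i j a = some i)).card)
    (hvmax : ∀ (a : A) (i : Fin m),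
      vmax a i = (Finset.univ.filter
        (fun j : Fin m => j ≠ i ∧ (Cs i j a = some i ∨ Cs i j a = none))).card)
    (Ms : A → Set (Fin m))
    (hMs : ∀ a : A, Ms a = {i : Fin m | ∀ j : Fin m, j ≠ i → vmin a j ≤ vmax a i}) :
    ∀ a : A, ∀ x ∈ γ a, M x ⊆ Ms a := by
  intro a x hx i hi
  rw [hM] at hi
  rw [hMs]
  intro j hj
  have h1 : vmin a j ≤ votes x j := by
    rw [hvmin, hvotes]
    apply Finset.card_le_card
    intro k hk
    simp only [Finset.mem_filter, Finset.mem_univ, true_and] at hk ⊢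
    refine ⟨hk.1, ?_⟩
    exact (hsound j k hk.1.symm a j hk.2).2 x hx
  have h2 : votes x i ≤ vmax a i := by
    rw [hvotes, hvmax]
    apply Finset.card_le_card
    intro k hk
    simp only [Finset.mem_filter, Finset.mem_univ, true_and] at hk ⊢
    refine ⟨hk.1, ?_⟩
    cases hcs : Cs i k a with
    | none => exact Or.inr rfl
    | some y =>
      left
      have := (hsound i k hk.1.symm a y hcs).2 x hx
      rw [hk.2] at this
      rw [← this]
  exact le_trans h1 (le_trans (hi j) h2)
end

section
/- Let m ≥ 2, let X be a set, and for every pair i ≠ j in Fin m let C_{i,j} : X → Fin m be a concrete binary classifier with C_{i,j}(x) ∈ {i, j} for all x, and assume the symmetry C_{i,j} = C_{j,i}. Define votes(x, i) = card {j | j ≠ i ∧ C_{i,j}(x) = i}. Let A be a type with concretization γ : A → Set X, and for each pair i ≠ j let C♯_{i,j} : A → Option (Fin m) be a sound abstract binary classifier: C♯_{i,j} = C♯_{j,i}, if C♯_{i,j}(a) = some y then y ∈ {i, j} and C_{i,j}(x) = y for all x ∈ γ(a). Define v_min(a, i) = card {j | j ≠ i ∧ C♯_{i,j}(a) = some i}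 and v_max(a, i) = card {j | j ≠ i ∧ (C♯_{i,j}(a) = some i ∨ C♯_{i,j}(a) = none)}. Then for every a : A, every x ∈ γ(a) and every i, v_min(a, i) ≤ votes(x, i) ≤ v_max(a, i). -/
/-- The abstract voting procedure brackets the concrete number of votes:
`v_min(a,i) ≤ votes(x,i) ≤ v_max(a,i)` for every `x ∈ γ(a)`. -/
theorem ovo_abstract_votes_bracket {X A : Type*}
    (m : ℕ) (hm : 2 ≤ m) (γ : A → Set X)
    (Cc : Fin m → Fin m → X → Fin m)
    (hrange : ∀ i j : Fin m, i ≠ j → ∀ x : X, Cc i j x = i ∨ Cc i j x = j)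
    (hsymm : ∀ i j : Fin m, Cc i j = Cc j i)
    (Cs : Fin m → Fin m → A → Option (Fin m))
    (hssymm : ∀ i j : Fin m, Cs i j = Cs j i)
    (hsound : ∀ i j : Fin m, i ≠ j → ∀ (a : A) (y : Fin m), Cs i j a = some y →
      (y = i ∨ y = j) ∧ ∀ x ∈ γ a, Cc i j x = y)
    (votes : X → Fin m → ℕ)
    (hvotes : ∀ (x : X) (i : Fin m),
      votes x i = (Finset.univ.filter (fun j : Fin m => j ≠ i ∧ Cc i j x = i)).card)
    (vmin vmax : A → Fin m → ℕ)
    (hvmin : ∀ (a : A) (i : Fin m),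
      vmin a i = (Finset.univ.filter (fun j : Fin m => j ≠ i ∧ Cs i j a = some i)).card)
    (hvmax : ∀ (a : A) (i : Fin m),
      vmax a i = (Finset.univ.filter
        (fun j : Fin m => j ≠ i ∧ (Cs i j a = some i ∨ Cs i j a = none))).card) :
    ∀ a : A, ∀ x ∈ γ a, ∀ i : Fin m, vmin a i ≤ votes x i ∧ votes x i ≤ vmax a i := by
  intro a x hx i
  rw [hvmin, hvmax, hvotes]
  constructor
  · apply Finset.card_le_card
    intro j hj
    simp only [Finset.mem_filter, Finset.mem_univ, true_and] at *
    obtain ⟨hji, hcs⟩ := hj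
    exact ⟨hji, (hsound i j (Ne.symm hji) a i hcs).2 x hx⟩
  · apply Finset.card_le_card
    intro j hj
    simp only [Finset.mem_filter, Finset.mem_univ, true_and] at *
    obtain ⟨hji, hcc⟩ := hj
    refine ⟨hji, ?_⟩
    cases h : Cs i j a with
    | none => exact Or.inr rfl
    | some y =>
      left
      have := (hsound i j (Ne.symm hji) a y h).2 x hx
      rw [this] at hcc
      rw [hcc]
end

section
/- Let X be a set, C : X → ℤ a classifier, A a type with concretization map γ : A → Set X, and C♯ : A → Option ℤ an abstract classifier that is sound for C (for every a and s, C♯(a) = some s implies C(x) = s for all x ∈ γ(a)) and complete for C (for every a, C♯(a) = none implies there exist x, x' ∈ γ(a) with C(x) ≠ C(x')). Let P : X → Set X be an adversarial region with x ∈ P(x) for every x, and let P♯ : X → A be an exact abstract perturbation, i.e., γ(P♯(x)) = P(x) for every x. Then ⟨C♯, P♯⟩ is a sound and complete robustness verifier: for every x : X, C♯(P♯(x)) = some (C(x)) if and only if C(x') = C(x) for every x' ∈ P(x). -/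
/-- A sound and complete abstract classifier together with an exact abstract
perturbation is a sound and complete robustness verifier. -/
theorem sound_complete_robustness_verifier {X A : Type*}
    (C : X → ℤ) (γ : A → Set X)
    (Csharp : A → Option ℤ)
    (hsound : ∀ (a : A) (s : ℤ), Csharp a = some s → ∀ x ∈ γ a, C x = s)
    (hcomplete : ∀ a : A, Csharp a = none →
      ∃ x ∈ γ a, ∃ x' ∈ γ a, C x ≠ C x')
    (P : X → Set X) (hP : ∀ x : X, x ∈ P x)
    (Psharp : X → A)
    (hPsharp : ∀ x : X, γ (Psharp x) = P x) :
    ∀ x : X, Csharp (Psharp x) = some (C x) ↔ ∀ x' ∈ P x, C x' = C x := by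
  intro x
  constructor
  · intro h x' hx'
    exact hsound _ _ h x' (by rw [hPsharp]; exact hx')
  · intro h
    cases hc : Csharp (Psharp x) with
    | none =>
      obtain ⟨y, hy, y', hy', hne⟩ := hcomplete _ hc
      rw [hPsharp] at hy hy'
      exact absurd ((h y hy).trans (h y' hy').symm) hne
    | some s =>
      have := hsound _ _ hc x (by rw [hPsharp]; exact hP x)
      rw [← this]
end

section
/- Let k ≥ 1, a₀ : ℝ and a : Fin k → ℝ. Then the range of the affine form â(ε) = a₀ + ∑_j a j * ε j over all noise vectors ε with ε j ∈ [-1, 1] for every j is exactly the closed interval [a₀ - ∑_j |a j|, a₀ + ∑_j |a j|]; that is, {a₀ + ∑_j a j * ε j | ∀ j, ε j ∈ Icc (-1) 1} = Icc (a₀ - ∑_j |a j|) (a₀ + ∑_j |a j|). -/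
/-- Exactness of the interval concretization of an affine form: the range of
`ε ↦ a₀ + ∑_j a j * ε j` over `[-1,1]^k` is `[a₀ - ∑_j |a j|, a₀ + ∑_j |a j|]`. -/
theorem affine_form_range (k : ℕ) (hk : 1 ≤ k) (a₀ : ℝ) (a : Fin k → ℝ) :
    {t : ℝ | ∃ ε : Fin k → ℝ, (∀ j, ε j ∈ Set.Icc (-1 : ℝ) 1) ∧
        t = a₀ + ∑ j, a j * ε j}
      = Set.Icc (a₀ - ∑ j, |a j|) (a₀ + ∑ j, |a j|) := by
  set S := ∑ j, |a j| with hS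
  ext t
  constructor
  · rintro ⟨ε, hε, rfl⟩
    have hb : |∑ j, a j * ε j| ≤ S := by
      calc |∑ j, a j * ε j| ≤ ∑ j, |a j * ε j| := Finset.abs_sum_le_sum_abs _ _
        _ ≤ ∑ j, |a j| := by
            apply Finset.sum_le_sum
            intro j _
            rw [abs_mul]
            have := abs_le.mpr (hε j)
            nlinarith [abs_nonneg (a j)]
    rw [abs_le] at hb
    constructor <;> linarith [hb.1, hb.2]
  · rintro ⟨h1, h2⟩
    have hS0 : 0 ≤ S := Finset.sum_nonneg fun j _ => abs_nonneg _
    rcases eq_or_lt_of_le hS0 with hSeq | hSpos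
    · refine ⟨0, fun j => ⟨by norm_num, by norm_num⟩, ?_⟩
      simp only [Pi.zero_apply, mul_zero, Finset.sum_const_zero]
      linarith
    · set s := t - a₀ with hs
      have hs1 : -S ≤ s := by linarith
      have hs2 : s ≤ S := by linarith
      refine ⟨fun j => (s / S) * Real.sign (a j), fun j => ?_, ?_⟩
      · have hd : |s / S| ≤ 1 := by
          rw [abs_div, abs_of_pos hSpos, div_le_one hSpos, abs_le]
          exact ⟨hs1, hs2⟩
        have hsg : |Real.sign (a j)| ≤ 1 := by
          rcases Real.sign_apply_eq (a j) with h | h | h <;> simp [h]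
        have : |(s / S) * Real.sign (a j)| ≤ 1 := by
          rw [abs_mul]
          nlinarith [abs_nonneg (s / S), abs_nonneg (Real.sign (a j))]
        exact abs_le.mp this
      · have key : ∀ j, a j * ((s / S) * Real.sign (a j)) = |a j| * (s / S) := by
          intro j
          rcases lt_trichotomy (a j) 0 with h | h | h
          · rw [Real.sign_of_neg h, abs_of_neg h]; ring
          · simp [h]
          · rw [Real.sign_of_pos h, abs_of_pos h]; ring
        simp only [key]
        rw [← Finset.sum_mul, ← hS, mul_div_cancel₀ _ (ne_of_gt hSpos)]
        ring
end

section
/- Let k ≥ 1 and let two reduced affine forms be given by centers a₀, b₀ : ℝ, coefficients a, b : Fin k → ℝ, and accumulated-error radii a_r, b_r : ℝ with a_r ≥ 0 and b_r ≥ 0. Define, for ε : Fin k → ℝ and η_a, η_b : ℝ, the nonlinear part f(ε, η_a, η_b) = (∑_j a j * ε j + a_r * η_a) * (∑_j b j * ε j + b_r * η_b), and let R_max and R_min be respectively the supremum and infimum of f over the compact set where every ε j ∈ [-1,1] and η_a, η_b ∈ [-1,1]. Then for every such ε, η_a, η_b, the product (a₀ + ∑_j a j * ε j + a_r * η_a)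 * (b₀ + ∑_j b j * ε j + b_r * η_b) lies in the closed interval [c - r, c + r], where c = a₀*b₀ + (R_max + R_min)/2 and r = ∑_j |a₀ * b j + b₀ * a j| + |a₀| * b_r + |b₀| * a_r + (R_max - R_min)/2. -/
/-- Soundness of the Skalna–Hladík abstract multiplication of reduced affine
forms: the concrete product of values of two RAFs on a shared noise vector lies
in the interval concretization `[c - r, c + r]` of the abstract product. -/
theorem raf_mul_sound (k : ℕ) (hk : 1 ≤ k)
    (a₀ b₀ ar br : ℝ) (a b : Fin k → ℝ) (har : 0 ≤ ar) (hbr : 0 ≤ br)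
    (f : (Fin k → ℝ) → ℝ → ℝ → ℝ)
    (hf : ∀ (ε : Fin k → ℝ) (ηa ηb : ℝ),
      f ε ηa ηb = ((∑ j, a j * ε j) + ar * ηa) * ((∑ j, b j * ε j) + br * ηb))
    (Rmax Rmin : ℝ)
    (hRmax : Rmax = sSup {t : ℝ | ∃ ε : Fin k → ℝ, ∃ ηa ηb : ℝ,
      (∀ j, ε j ∈ Set.Icc (-1 : ℝ) 1) ∧ ηa ∈ Set.Icc (-1 : ℝ) 1 ∧
      ηb ∈ Set.Icc (-1 : ℝ) 1 ∧ t = f ε ηa ηb})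
    (hRmin : Rmin = sInf {t : ℝ | ∃ ε : Fin k → ℝ, ∃ ηa ηb : ℝ,
      (∀ j, ε j ∈ Set.Icc (-1 : ℝ) 1) ∧ ηa ∈ Set.Icc (-1 : ℝ) 1 ∧
      ηb ∈ Set.Icc (-1 : ℝ) 1 ∧ t = f ε ηa ηb}) :
    ∀ (ε : Fin k → ℝ) (ηa ηb : ℝ),
      (∀ j, ε j ∈ Set.Icc (-1 : ℝ) 1) → ηa ∈ Set.Icc (-1 : ℝ) 1 →
      ηb ∈ Set.Icc (-1 : ℝ) 1 →
      (a₀ + (∑ j, a j * ε j) + ar * ηa) * (b₀ + (∑ j, b j * ε j) + br * ηb) ∈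
        Set.Icc
          ((a₀ * b₀ + (Rmax + Rmin) / 2) -
            ((∑ j, |a₀ * b j + b₀ * a j|) + |a₀| * br + |b₀| * ar + (Rmax - Rmin) / 2))
          ((a₀ * b₀ + (Rmax + Rmin) / 2) +
            ((∑ j, |a₀ * b j + b₀ * a j|) + |a₀| * br + |b₀| * ar + (Rmax - Rmin) / 2)) := by
  intro ε ηa ηb hε hηa hηb
  set S : Set ℝ := {t : ℝ | ∃ ε : Fin k → ℝ, ∃ ηa ηb : ℝ,
      (∀ j, ε j ∈ Set.Icc (-1 : ℝ) 1) ∧ ηa ∈ Set.Icc (-1 : ℝ) 1 ∧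
      ηb ∈ Set.Icc (-1 : ℝ) 1 ∧ t = f ε ηa ηb} with hS
  -- pointwise bound for members of S
  have hboundS : ∀ t ∈ S, |t| ≤ ((∑ j, |a j|) + ar) * ((∑ j, |b j|) + br) := by
    rintro t ⟨ε', ηa', ηb', hε', hηa', hηb', rfl⟩
    rw [hf]
    rw [abs_mul]
    have h1 : |(∑ j, a j * ε' j) + ar * ηa'| ≤ (∑ j, |a j|) + ar := by
      refine (abs_add_le _ _).trans (add_le_add ?_ ?_)
      · refine (Finset.abs_sum_le_sum_abs _ _).trans (Finset.sum_le_sum fun j _ => ?_)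
        rw [abs_mul]
        exact mul_le_of_le_one_right (abs_nonneg _) (abs_le.mpr ⟨(hε' j).1, (hε' j).2⟩)
      · rw [abs_mul, abs_of_nonneg har]
        exact mul_le_of_le_one_right har (abs_le.mpr ⟨hηa'.1, hηa'.2⟩)
    have h2 : |(∑ j, b j * ε' j) + br * ηb'| ≤ (∑ j, |b j|) + br := by
      refine (abs_add_le _ _).trans (add_le_add ?_ ?_)
      · refine (Finset.abs_sum_le_sum_abs _ _).trans (Finset.sum_le_sum fun j _ => ?_)
        rw [abs_mul]
        exact mul_le_of_le_one_right (abs_nonneg _) (abs_le.mpr ⟨(hε' j).1, (hε' j).2⟩)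
      · rw [abs_mul, abs_of_nonneg hbr]
        exact mul_le_of_le_one_right hbr (abs_le.mpr ⟨hηb'.1, hηb'.2⟩)
    exact mul_le_mul h1 h2 (abs_nonneg _) (le_trans (abs_nonneg _) h1)
  have hbddA : BddAbove S :=
    ⟨((∑ j, |a j|) + ar) * ((∑ j, |b j|) + br), fun t ht => (abs_le.mp (hboundS t ht)).2⟩
  have hbddB : BddBelow S :=
    ⟨-(((∑ j, |a j|) + ar) * ((∑ j, |b j|) + br)), fun t ht => (abs_le.mp (hboundS t ht)).1⟩
  have hmem : f ε ηa ηb ∈ S := ⟨ε, ηa, ηb, hε, hηa, hηb, rfl⟩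
  have hFub : f ε ηa ηb ≤ Rmax := hRmax ▸ le_csSup hbddA hmem
  have hFlb : Rmin ≤ f ε ηa ηb := hRmin ▸ csInf_le hbddB hmem
  -- linear part bound
  have habsL : |∑ j, (a₀ * b j + b₀ * a j) * ε j| ≤ ∑ j, |a₀ * b j + b₀ * a j| := by
    refine (Finset.abs_sum_le_sum_abs _ _).trans (Finset.sum_le_sum fun j _ => ?_)
    rw [abs_mul]
    exact mul_le_of_le_one_right (abs_nonneg _) (abs_le.mpr ⟨(hε j).1, (hε j).2⟩)
  have hb1 : |a₀ * (br * ηb)| ≤ |a₀| * br := by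
    rw [abs_mul, abs_mul, abs_of_nonneg hbr]
    exact mul_le_mul_of_nonneg_left
      (mul_le_of_le_one_right hbr (abs_le.mpr ⟨hηb.1, hηb.2⟩)) (abs_nonneg _)
  have hb2 : |b₀ * (ar * ηa)| ≤ |b₀| * ar := by
    rw [abs_mul, abs_mul, abs_of_nonneg har]
    exact mul_le_mul_of_nonneg_left
      (mul_le_of_le_one_right har (abs_le.mpr ⟨hηa.1, hηa.2⟩)) (abs_nonneg _)
  -- algebraic identity
  have hid : (a₀ + (∑ j, a j * ε j) + ar * ηa) * (b₀ + (∑ j, b j * ε j) + br * ηb)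
      = a₀ * b₀ + (∑ j, (a₀ * b j + b₀ * a j) * ε j) + a₀ * (br * ηb) + b₀ * (ar * ηa)
        + f ε ηa ηb := by
    have hL : (∑ j, (a₀ * b j + b₀ * a j) * ε j)
        = a₀ * (∑ j, b j * ε j) + b₀ * (∑ j, a j * ε j) := by
      rw [Finset.mul_sum, Finset.mul_sum, ← Finset.sum_add_distrib]
      exact Finset.sum_congr rfl fun j _ => by ring
    rw [hL, hf]; ring
  rw [hid]
  obtain ⟨hL1, hL2⟩ := abs_le.mp habsL
  obtain ⟨h11, h12⟩ := abs_le.mp hb1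
  obtain ⟨h21, h22⟩ := abs_le.mp hb2
  constructor <;> [linarith; linarith]
end
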